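/- (Symmetrization) For any real multilinear polynomial p on {0,1}^n of degree d, the function q : {0,...,n} → ℝ defined by q(k) = (Σ_{y : |y|=k} p(y)) / C(n,k) agrees with a univariate real polynomial of degree at most d. -/

import Mathlib

open MvPolynomial

private lemma nat_df_identity (n k m : ℕ) (hkn : k ≤ n) :
    n.choose k * k.descFactorial m =
      (if m ≤ k then (n - m).choose (k - m) else 0) * n.descFactorial m := by
  by_cases hmk : m ≤ k
  · simp only [hmk, if_true]
    rw [Nat.descFactorial_eq_factorial_mul_choose, Nat.descFactorial_eq_factorial_mul_choose]
    calc n.choose k * (m.factorial * k.choose m)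
        = m.factorial * (n.choose k * k.choose m) := by ring
      _ = m.factorial * (n.choose m * (n - m).choose (k - m)) := by
          rw [Nat.choose_mul hmk]
      _ = (n - m).choose (k - m) * (m.factorial * n.choose m) := by ring
  · simp only [hmk, if_false, Nat.zero_mul]
    rw [Nat.descFactorial_eq_zero_iff_lt.mpr (lt_of_not_ge hmk), Nat.mul_zero]

private lemma count_lemma (n k : ℕ) (S : Finset (Fin n)) :
    (Finset.univ.filter (fun y : Fin n → Bool =>
      (Finset.univ.filter (fun i => y i = true)).card = k ∧ ∀ i ∈ S, y i = true)).card
    = if S.card ≤ k then (n - S.card).choose (k - S.card) else 0 := by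
  by_cases h : S.card ≤ k
  · simp only [h, if_true]
    have hc : Sᶜ.card = n - S.card := by rw [Finset.card_compl]; simp
    rw [← hc, ← Finset.card_powersetCard (k - S.card) Sᶜ]
    · apply Finset.card_bij'
        (i := fun (y : Fin n → Bool) _ => (Finset.univ.filter (fun i => y i = true)) \ S)
        (j := fun (T : Finset (Fin n)) _ => fun i => decide (i ∈ S ∪ T))
      · intro y hy
        simp only [Finset.mem_filter, Finset.mem_univ, true_and] at hy
        obtain ⟨hcard, hsub⟩ := hy
        have hS : S ⊆ Finset.univ.filter (fun i => y i = true) := by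
          intro i hi; simp [hsub i hi]
        rw [Finset.mem_powersetCard]
        constructor
        · intro i hi
          simp only [Finset.mem_sdiff] at hi
          simp [Finset.mem_compl, hi.2]
        · rw [Finset.card_sdiff_of_subset hS, hcard]
      · intro T hT
        rw [Finset.mem_powersetCard] at hT
        simp only [Finset.mem_filter, Finset.mem_univ, true_and]
        constructor
        · have : Finset.univ.filter (fun i => decide (i ∈ S ∪ T) = true) = S ∪ T := by
            ext i; simp
          rw [this, Finset.card_union_of_disjoint, hT.2]
          · omega
          · exact Finset.disjoint_left.mpr fun i hiS hiT =>
              (Finset.mem_compl.mp (hT.1 hiT)) hiS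
        · intro i hi; simp [Finset.mem_union, hi]
      · intro y hy
        simp only [Finset.mem_filter, Finset.mem_univ, true_and] at hy
        funext i
        by_cases hyi : y i = true
        · have hmem : i ∈ S ∪ ((Finset.univ.filter (fun j => y j = true)) \ S) := by
            by_cases hiS : i ∈ S
            · exact Finset.mem_union_left _ hiS
            · exact Finset.mem_union_right _ (Finset.mem_sdiff.mpr ⟨by simp [hyi], hiS⟩)
          simp [hmem, hyi]
        · have hmem : i ∉ S ∪ ((Finset.univ.filter (fun j => y j = true)) \ S) := by
            simp only [Finset.mem_union, Finset.mem_sdiff, Finset.mem_filter, Finset.mem_univ,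
              true_and, not_or]
            exact ⟨fun hiS => hyi (hy.2 i hiS), fun hc => hyi hc.1⟩
          exact (decide_eq_false hmem).trans (Bool.eq_false_iff.mpr hyi).symm
      · intro T hT
        rw [Finset.mem_powersetCard] at hT
        ext i
        simp only [Finset.mem_sdiff, Finset.mem_filter, Finset.mem_univ, true_and,
          Finset.mem_union, decide_eq_true_eq]
        constructor
        · rintro ⟨h1 | h1, h2⟩
          · exact absurd h1 h2
          · exact h1
        · intro hiT
          exact ⟨Or.inr hiT, fun hiS => (Finset.mem_compl.mp (hT.1 hiT)) hiS⟩
  · simp only [h, if_false]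
    rw [Finset.card_eq_zero, Finset.filter_eq_empty_iff]
    intro y _
    rintro ⟨hcard, hsub⟩
    apply h
    rw [← hcard]
    apply Finset.card_le_card
    intro i hi; simp [hsub i hi]

private lemma prod_bool_pow (n : ℕ) (y : Fin n → Bool) (s : Fin n →₀ ℕ) :
    (∏ i ∈ s.support, (if y i then (1:ℝ) else 0) ^ s i)
      = if ∀ i ∈ s.support, y i = true then 1 else 0 := by
  by_cases h : ∀ i ∈ s.support, y i = true
  · rw [if_pos h]
    apply Finset.prod_eq_one
    intro i hi
    rw [h i hi]
    simp
  · rw [if_neg h]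
    push_neg at h
    obtain ⟨i, hi, hyi⟩ := h
    apply Finset.prod_eq_zero hi
    rw [if_neg hyi]
    exact zero_pow (Finsupp.mem_support_iff.mp hi)

theorem stmt6 (n d : ℕ) (p : MvPolynomial (Fin n) ℝ) (hdeg : p.totalDegree ≤ d) :
    ∃ Q : Polynomial ℝ, Q.natDegree ≤ d ∧ ∀ k : ℕ, k ≤ n →
      Q.eval (k : ℝ) =
        (∑ y ∈ Finset.univ.filter
            (fun y : Fin n → Bool => (Finset.univ.filter (fun i => y i = true)).card = k),
          eval (fun i => if y i then (1:ℝ) else 0) p) / (Nat.choose n k : ℝ) := by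
  refine ⟨∑ s ∈ p.support, Polynomial.C (p.coeff s / (n.descFactorial s.support.card : ℝ)) *
      descPochhammer ℝ s.support.card, ?_, ?_⟩
  · apply Polynomial.natDegree_sum_le_of_forall_le
    intro s hs
    refine le_trans (Polynomial.natDegree_C_mul_le _ _) ?_
    rw [descPochhammer_natDegree]
    calc s.support.card = ∑ i ∈ s.support, 1 := by simp
      _ ≤ ∑ i ∈ s.support, s i := Finset.sum_le_sum fun i hi =>
          Nat.one_le_iff_ne_zero.mpr (Finsupp.mem_support_iff.mp hi)
      _ ≤ p.totalDegree := le_totalDegree hs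
      _ ≤ d := hdeg
  · intro k hk
    have hC : (0:ℝ) < (n.choose k : ℝ) := by
      exact_mod_cast Nat.choose_pos hk
    rw [eq_div_iff hC.ne']
    have hdf : ∀ s : Fin n →₀ ℕ, (0:ℝ) < (n.descFactorial s.support.card : ℝ) := by
      intro s
      have h1 : s.support.card ≤ n := le_trans (Finset.card_le_univ _) (by simp)
      have h2 : n.descFactorial s.support.card ≠ 0 := by
        intro h0
        exact absurd (Nat.descFactorial_eq_zero_iff_lt.mp h0) (not_lt.mpr h1)
      exact_mod_cast Nat.pos_of_ne_zero h2
    -- RHS: swap sums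
    have hRHS : (∑ y ∈ Finset.univ.filter
            (fun y : Fin n → Bool => (Finset.univ.filter (fun i => y i = true)).card = k),
          eval (fun i => if y i then (1:ℝ) else 0) p)
        = ∑ s ∈ p.support, p.coeff s *
            ((if s.support.card ≤ k then ((n - s.support.card).choose (k - s.support.card) : ℝ)
              else 0)) := by
      simp only [eval_eq]
      rw [Finset.sum_comm]
      apply Finset.sum_congr rfl
      intro s hs
      rw [← Finset.mul_sum]
      congr 1
      have : ∀ y : Fin n → Bool, (∏ i ∈ s.support, (if y i then (1:ℝ) else 0) ^ s i)
          = if ∀ i ∈ s.support, y i = true then 1 else 0 := fun y => prod_bool_pow n y s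
      simp only [this]
      rw [Finset.sum_boole, Finset.filter_filter, count_lemma n k s.support]
      split <;> simp
    rw [hRHS, Polynomial.eval_finset_sum, Finset.sum_mul]
    apply Finset.sum_congr rfl
    intro s hs
    rw [Polynomial.eval_mul, Polynomial.eval_C, descPochhammer_eval_eq_descFactorial]
    rw [div_mul_eq_mul_div, div_mul_eq_mul_div, mul_assoc]
    have := nat_df_identity n k s.support.card hk
    have hcast : ((k.descFactorial s.support.card : ℝ) * (n.choose k : ℝ))
        = (if s.support.card ≤ k then ((n - s.support.card).choose (k - s.support.card) : ℝ)
            else 0) * (n.descFactorial s.support.card : ℝ) := by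
      split
      · rename_i h
        rw [← Nat.cast_mul, ← Nat.cast_mul, mul_comm (k.descFactorial _)]
        exact_mod_cast congrArg (Nat.cast : ℕ → ℝ) (by rw [this, if_pos h])
      · rename_i h
        rw [← Nat.cast_mul, mul_comm (k.descFactorial _)]
        rw [this, if_neg h]
        simp
    rw [div_eq_iff (hdf s).ne'] at *
    rw [hcast]
    ring
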